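/- arXiv:1411.5141 — 2 statements merged into one kernel-verified Lean document; each statement's English description precedes it below -/
import Mathlib

section
/- For every real p with 1 ≤ p ≤ 3 there exists a constant C > 0 such that for all real a, b: | |a+b|^p − |a|^p − |b|^p − p·a·b·(|a|^{p−2} + |b|^{p−2}) | ≤ C·|a|·|b|^{p−1} if |a| ≥ |b|, and ≤ C·|a|^{p−1}·|b| if |a| ≤ |b|. -/
open Real

-- gradient inequality for t ↦ t^p on [0,∞), from Bernoulli
lemma grad_ineq {p : ℝ} (hp : 1 ≤ p) {u v : ℝ} (hu : 0 < u) (hv : 0 ≤ v) :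
    u ^ p + p * u ^ (p - 1) * (v - u) ≤ v ^ p := by
  have hs : (-1 : ℝ) ≤ v / u - 1 := by
    have : 0 ≤ v / u := div_nonneg hv hu.le
    linarith
  have h := one_add_mul_self_le_rpow_one_add hs hp
  rw [show 1 + (v / u - 1) = v / u by ring, Real.div_rpow hv hu.le] at h
  have hup : 0 < u ^ p := Real.rpow_pos_of_pos hu p
  have h2 : u ^ p * (1 + p * (v / u - 1)) ≤ u ^ p * (v ^ p / u ^ p) :=
    mul_le_mul_of_nonneg_left h hup.le
  have e2 : u ^ p * (v ^ p / u ^ p) = v ^ p := by field_simp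
  have huu : u ^ (p - 1) * u = u ^ p := by
    rw [← Real.rpow_add_one hu.ne' (p - 1)]; norm_num
  have expand : u ^ p * (1 + p * (v / u - 1)) = u ^ p + p * u ^ (p - 1) * (v - u) := by
    rw [← huu]; field_simp
  rw [expand, e2] at h2
  exact h2

-- Lemma A: |x|^p + p * sign x * |x|^(p-1) * d ≤ |x+d|^p
lemma lemA {p : ℝ} (hp : 1 ≤ p) (x d : ℝ) :
    |x| ^ p + p * (Real.sign x * |x| ^ (p - 1)) * d ≤ |x + d| ^ p := by
  rcases eq_or_ne x 0 with rfl | hx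
  · simp only [Real.sign_zero, zero_mul, mul_zero, abs_zero]
    rw [Real.zero_rpow (by positivity : p ≠ 0)]
    simpa using Real.rpow_nonneg (abs_nonneg (0 + d)) p
  · have hx' : 0 < |x| := abs_pos.mpr hx
    have hsx : Real.sign x * x = |x| := by
      rcases lt_or_gt_of_ne hx with h | h
      · rw [Real.sign_of_neg h, abs_of_neg h]; ring
      · rw [Real.sign_of_pos h, abs_of_pos h]; ring
    have h1 : Real.sign x * d ≤ |x + d| - |x| := by
      have h2 : Real.sign x * (x + d) ≤ |x + d| := by
        calc Real.sign x * (x + d) ≤ |Real.sign x * (x + d)| := le_abs_self _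
          _ = |Real.sign x| * |x + d| := abs_mul _ _
          _ ≤ 1 * |x + d| := by
              apply mul_le_mul_of_nonneg_right _ (abs_nonneg _)
              rcases Real.sign_apply_eq x with h | h | h <;> rw [h] <;> norm_num
          _ = |x + d| := one_mul _
      nlinarith [h2, hsx]
    have hpow : 0 ≤ p * |x| ^ (p - 1) := by positivity
    calc |x| ^ p + p * (Real.sign x * |x| ^ (p - 1)) * d
        = |x| ^ p + p * |x| ^ (p - 1) * (Real.sign x * d) := by ring
      _ ≤ |x| ^ p + p * |x| ^ (p - 1) * (|x + d| - |x|) := by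
          exact add_le_add le_rfl (mul_le_mul_of_nonneg_left h1 hpow)
      _ ≤ |x + d| ^ p := grad_ineq hp hx' (abs_nonneg _)

lemma gval_pos {α x : ℝ} (hx : 0 < x) : Real.sign x * |x| ^ α = x ^ α := by
  rw [Real.sign_of_pos hx, abs_of_pos hx, one_mul]

lemma gval_neg {α x : ℝ} (hx : x < 0) : Real.sign x * |x| ^ α = -(-x) ^ α := by
  rw [Real.sign_of_neg hx, abs_of_neg hx]; ring

lemma gmono {α : ℝ} (ha : 0 ≤ α) {x y : ℝ} (hxy : x ≤ y) :
    Real.sign x * |x| ^ α ≤ Real.sign y * |y| ^ α := by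
  rcases lt_trichotomy x 0 with hx | hx | hx
  · rcases lt_trichotomy y 0 with hy | hy | hy
    · rw [gval_neg hx, gval_neg hy, neg_le_neg_iff]
      exact Real.rpow_le_rpow (by linarith) (by linarith) ha
    · subst hy
      rw [gval_neg hx]
      simp only [Real.sign_zero, zero_mul]
      have : (0:ℝ) ≤ (-x) ^ α := Real.rpow_nonneg (by linarith) α
      linarith
    · rw [gval_neg hx, gval_pos hy]
      have h1 : (0:ℝ) ≤ (-x) ^ α := Real.rpow_nonneg (by linarith) α
      have h2 : (0:ℝ) ≤ y ^ α := Real.rpow_nonneg (by linarith) α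
      linarith
  · subst hx
    simp only [Real.sign_zero, zero_mul]
    rcases lt_or_eq_of_le hxy with hy | hy
    · rw [gval_pos hy]; exact Real.rpow_nonneg hy.le α
    · rw [← hy]; simp
  · have hy : 0 < y := lt_of_lt_of_le hx hxy
    rw [gval_pos hx, gval_pos hy]
    exact Real.rpow_le_rpow hx.le hxy ha

lemma subadd {α : ℝ} (h0 : 0 ≤ α) (h1 : α ≤ 1) {a b : ℝ} (ha : 0 ≤ a) (hb : 0 ≤ b) :
    (a + b) ^ α ≤ a ^ α + b ^ α := by
  have h := NNReal.rpow_add_le_add_rpow a.toNNReal b.toNNReal h0 h1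
  have h2 := NNReal.coe_le_coe.mpr h
  push_cast [NNReal.coe_rpow] at h2
  rwa [Real.coe_toNNReal _ ha, Real.coe_toNNReal _ hb] at h2

-- ordered Hölder bound
lemma lemB_aux {α : ℝ} (h0 : 0 ≤ α) (h1 : α ≤ 1) {x y : ℝ} (hyx : y ≤ x) :
    Real.sign x * |x| ^ α - Real.sign y * |y| ^ α ≤ 2 * (x - y) ^ α := by
  have hkey : ∀ u v : ℝ, 0 ≤ v → v ≤ u → u ^ α - v ^ α ≤ (u - v) ^ α := by
    intro u v hv hvu
    have := subadd h0 h1 (show (0:ℝ) ≤ u - v by linarith) hv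
    rw [show u - v + v = u by ring] at this
    linarith
  rcases lt_trichotomy y 0 with hy | hy | hy
  · rcases lt_trichotomy x 0 with hx | hx | hx
    · rw [gval_neg hx, gval_neg hy]
      have := hkey (-y) (-x) (by linarith) (by linarith)
      have h2 : (0:ℝ) ≤ (x - y) ^ α := Real.rpow_nonneg (by linarith) α
      rw [show -y - -x = x - y by ring] at this
      linarith
    · subst hx
      simp only [Real.sign_zero, zero_mul, abs_zero, gval_neg hy]
      have h2 : (0:ℝ) ≤ (-y) ^ α := Real.rpow_nonneg (by linarith) α
      rw [show (0:ℝ) - y = -y by ring]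
      linarith
    · rw [gval_pos hx, gval_neg hy]
      have h1' : x ^ α ≤ (x - y) ^ α := Real.rpow_le_rpow (by linarith) (by linarith) h0
      have h2' : (-y) ^ α ≤ (x - y) ^ α := Real.rpow_le_rpow (by linarith) (by linarith) h0
      linarith
  · subst hy
    simp only [Real.sign_zero, zero_mul, abs_zero]
    rcases lt_or_eq_of_le hyx with hx | hx
    · rw [gval_pos hx, sub_zero]
      have : x ^ α ≤ 2 * x ^ α := by
        have := Real.rpow_nonneg hx.le α; linarith
      simpa using this
    · rw [← hx]
      simp only [Real.sign_zero, zero_mul, sub_zero, sub_self]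
      positivity
  · have hx : 0 < x := lt_of_lt_of_le hy hyx
    rw [gval_pos hx, gval_pos hy]
    have := hkey x y hy.le hyx
    have h2 : (0:ℝ) ≤ (x - y) ^ α := Real.rpow_nonneg (by linarith) α
    linarith

lemma lemB {α : ℝ} (h0 : 0 ≤ α) (h1 : α ≤ 1) (x y : ℝ) :
    |Real.sign x * |x| ^ α - Real.sign y * |y| ^ α| ≤ 2 * |x - y| ^ α := by
  rcases le_total y x with h | h
  · rw [abs_of_nonneg (by linarith [gmono h0 h]), abs_of_nonneg (by linarith : (0:ℝ) ≤ x - y)]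
    exact lemB_aux h0 h1 h
  · rw [abs_sub_comm, abs_of_nonneg (by linarith [gmono h0 h]), abs_sub_comm x y,
      abs_of_nonneg (by linarith : (0:ℝ) ≤ y - x)]
    exact lemB_aux h0 h1 h

-- ordered Lipschitz-type bound for α ≥ 1
lemma lemC_aux {α : ℝ} (ha : 1 ≤ α) {x y : ℝ} (hyx : y ≤ x) :
    Real.sign x * |x| ^ α - Real.sign y * |y| ^ α
      ≤ α * max |x| |y| ^ (α - 1) * (x - y) := by
  set M := max |x| |y| with hM
  have hM0 : 0 ≤ M := le_trans (abs_nonneg x) (le_max_left _ _)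
  have hMx : |x| ≤ M := le_max_left _ _
  have hMy : |y| ≤ M := le_max_right _ _
  have hMp : 0 ≤ M ^ (α - 1) := Real.rpow_nonneg hM0 _
  -- key : for 0 ≤ v ≤ u ≤ M : u^α - v^α ≤ α * M^(α-1) * (u - v)
  have hkey : ∀ u v : ℝ, 0 ≤ v → v ≤ u → u ≤ M → u ^ α - v ^ α ≤ α * M ^ (α - 1) * (u - v) := by
    intro u v hv hvu huM
    rcases eq_or_lt_of_le (hv.trans hvu) with h | hu
    · rw [← h] at hvu ⊢
      have hv0 : v = 0 := le_antisymm (by linarith) hv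
      subst hv0
      simp
    · have h := grad_ineq ha hu hv
      have h2 : u ^ (α - 1) ≤ M ^ (α - 1) :=
        Real.rpow_le_rpow hu.le huM (by linarith)
      have h3 : α * u ^ (α - 1) * (u - v) ≤ α * M ^ (α - 1) * (u - v) := by
        apply mul_le_mul_of_nonneg_right _ (by linarith)
        have : 0 < α := by linarith
        nlinarith
      nlinarith
  -- also : for 0 ≤ u ≤ M : u^α ≤ M^(α-1) * u
  have hkey2 : ∀ u : ℝ, 0 ≤ u → u ≤ M → u ^ α ≤ M ^ (α - 1) * u := by
    intro u hu huM
    rcases eq_or_lt_of_le hu with h | hu'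
    · rw [← h, Real.zero_rpow (by linarith : α ≠ 0)]; simp
    · have : u ^ α = u ^ (α - 1) * u := by
        rw [← Real.rpow_add_one hu'.ne' (α - 1)]; norm_num
      rw [this]
      exact mul_le_mul_of_nonneg_right (Real.rpow_le_rpow hu'.le huM (by linarith)) hu
  rcases lt_trichotomy y 0 with hy | hy | hy
  · rcases lt_trichotomy x 0 with hx | hx | hx
    · rw [gval_neg hx, gval_neg hy]
      have := hkey (-y) (-x) (by linarith) (by linarith) (by rw [← abs_of_neg hy]; exact hMy)
      have hα : (0:ℝ) < α := by linarith
      nlinarith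
    · subst hx
      rw [gval_neg hy]
      simp only [Real.sign_zero, zero_mul, abs_zero]
      have := hkey2 (-y) (by linarith) (by rw [← abs_of_neg hy]; exact hMy)
      nlinarith [mul_nonneg (by linarith : (0:ℝ) ≤ α - 1)
        (mul_nonneg hMp (by linarith : (0:ℝ) ≤ -y))]
    · rw [gval_pos hx, gval_neg hy]
      have h1 := hkey2 x hx.le (by rw [← abs_of_pos hx]; exact hMx)
      have h2 := hkey2 (-y) (by linarith) (by rw [← abs_of_neg hy]; exact hMy)
      nlinarith [mul_le_mul_of_nonneg_left (add_le_add h1 h2) (by linarith : (0:ℝ) ≤ α - 1),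
        mul_nonneg hMp (by linarith : (0:ℝ) ≤ x - y)]
  · subst hy
    simp only [Real.sign_zero, zero_mul, abs_zero, sub_zero]
    rcases eq_or_lt_of_le hyx with h | hx
    · rw [← h]; simp
    · rw [gval_pos hx]
      have h1 := hkey2 x hx.le (by rw [← abs_of_pos hx]; exact hMx)
      nlinarith [mul_nonneg (by linarith : (0:ℝ) ≤ α - 1) (mul_nonneg hMp hx.le)]
  · have hx : 0 < x := lt_of_lt_of_le hy hyx
    rw [gval_pos hx, gval_pos hy]
    exact hkey x y hy.le hyx (by rw [← abs_of_pos hx]; exact hMx)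

lemma lemC {α : ℝ} (ha : 1 ≤ α) (x y : ℝ) :
    |Real.sign x * |x| ^ α - Real.sign y * |y| ^ α|
      ≤ α * max |x| |y| ^ (α - 1) * |x - y| := by
  rcases le_total y x with h | h
  · rw [abs_of_nonneg (by linarith [gmono (by linarith : (0:ℝ) ≤ α) h]),
      abs_of_nonneg (by linarith : (0:ℝ) ≤ x - y)]
    exact lemC_aux ha h
  · rw [abs_sub_comm, abs_of_nonneg (by linarith [gmono (by linarith : (0:ℝ) ≤ α) h]),
      abs_sub_comm x y, abs_of_nonneg (by linarith : (0:ℝ) ≤ y - x)]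
    have := lemC_aux ha h
    rwa [max_comm] at this

lemma keylem (p : ℝ) (hp1 : 1 ≤ p) (hp3 : p ≤ 3) (a b : ℝ) (hba : |b| ≤ |a|) :
    |(|a + b| ^ p - |a| ^ p - |b| ^ p -
        p * (Real.sign a * |a| ^ (p - 1) * b + a * Real.sign b * |b| ^ (p - 1)))| ≤
      20 * |a| * |b| ^ (p - 1) := by
  rcases eq_or_ne b 0 with rfl | hb
  · simp only [add_zero, abs_zero, Real.sign_zero, mul_zero, zero_mul, add_zero, sub_zero]
    rw [Real.zero_rpow (by positivity : p ≠ 0)]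
    simp only [sub_zero, sub_self, mul_zero, sub_zero, zero_sub, abs_neg, abs_zero]
    positivity
  have ha : a ≠ 0 := by
    intro h; subst h; simp at hba; exact hb hba
  have hb' : 0 < |b| := abs_pos.mpr hb
  have ha' : 0 < |a| := abs_pos.mpr ha
  have hb1 : 0 ≤ |b| ^ (p - 1) := Real.rpow_nonneg (abs_nonneg b) _
  -- R and its bounds
  have hA1 := lemA hp1 a b
  have hA2 := lemA hp1 (a + b) (-b)
  rw [show a + b + -b = a by ring] at hA2
  set R : ℝ := |a + b| ^ p - |a| ^ p - p * (Real.sign a * |a| ^ (p - 1)) * b with hR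
  have hR0 : 0 ≤ R := by rw [hR]; linarith
  have hRle : R ≤ p * |b| *
      |Real.sign (a + b) * |a + b| ^ (p - 1) - Real.sign a * |a| ^ (p - 1)| := by
    have h1 : R ≤ p * b * (Real.sign (a + b) * |a + b| ^ (p - 1)
        - Real.sign a * |a| ^ (p - 1)) := by
      rw [hR]; nlinarith [hA2]
    calc R ≤ p * b * (Real.sign (a + b) * |a + b| ^ (p - 1)
          - Real.sign a * |a| ^ (p - 1)) := h1
      _ ≤ |p * b * (Real.sign (a + b) * |a + b| ^ (p - 1)
          - Real.sign a * |a| ^ (p - 1))| := le_abs_self _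
      _ = p * |b| * |Real.sign (a + b) * |a + b| ^ (p - 1)
          - Real.sign a * |a| ^ (p - 1)| := by
          rw [abs_mul, abs_mul, abs_of_nonneg (by linarith : (0:ℝ) ≤ p)]
  -- bound on R : R ≤ 12 * |a| * |b|^(p-1)
  have hRbound : R ≤ 12 * |a| * |b| ^ (p - 1) := by
    rcases le_total p 2 with hple | hpge
    · -- p ≤ 2
      have hB := lemB (by linarith : (0:ℝ) ≤ p - 1) (by linarith) (a + b) a
      rw [show a + b - a = b by ring] at hB
      have h2 : R ≤ p * |b| * (2 * |b| ^ (p - 1)) := by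
        refine hRle.trans ?_
        exact mul_le_mul_of_nonneg_left hB (by positivity)
      have h3 : |b| * |b| ^ (p - 1) ≤ |a| * |b| ^ (p - 1) :=
        mul_le_mul_of_nonneg_right hba hb1
      nlinarith [mul_le_mul_of_nonneg_right hba hb1]
    · -- 2 ≤ p
      have hC := lemC (by linarith : (1:ℝ) ≤ p - 1) (a + b) a
      rw [show a + b - a = b by ring, show p - 1 - 1 = p - 2 by ring] at hC
      set M : ℝ := max |a + b| |a| with hM
      have hM0 : 0 < M := lt_of_lt_of_le ha' (le_max_right _ _)
      have hM2 : M ≤ 2 * |a| := by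
        apply max_le _ (by linarith)
        calc |a + b| ≤ |a| + |b| := abs_add_le a b
          _ ≤ 2 * |a| := by linarith
      have hMa : M ^ (p - 2) ≤ 2 * |a| ^ (p - 2) := by
        calc M ^ (p - 2) ≤ (2 * |a|) ^ (p - 2) :=
            Real.rpow_le_rpow hM0.le hM2 (by linarith)
          _ = 2 ^ (p - 2) * |a| ^ (p - 2) :=
            Real.mul_rpow (by norm_num) ha'.le
          _ ≤ 2 * |a| ^ (p - 2) := by
            have h2' : (2:ℝ) ^ (p - 2) ≤ 2 ^ (1:ℝ) :=
              Real.rpow_le_rpow_of_exponent_le (by norm_num) (by linarith)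
            rw [Real.rpow_one] at h2'
            exact mul_le_mul_of_nonneg_right h2' (Real.rpow_nonneg ha'.le _)
      have hCb : |Real.sign (a + b) * |a + b| ^ (p - 1) - Real.sign a * |a| ^ (p - 1)|
          ≤ (p - 1) * (2 * |a| ^ (p - 2)) * |b| := by
        refine hC.trans ?_
        apply mul_le_mul_of_nonneg_right _ (abs_nonneg b)
        exact mul_le_mul_of_nonneg_left hMa (by linarith)
      have h2 : R ≤ p * |b| * ((p - 1) * (2 * |a| ^ (p - 2)) * |b|) :=
        hRle.trans (mul_le_mul_of_nonneg_left hCb (by positivity))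
      -- |a|^(p-2) * |b|^2 ≤ |a| * |b|^(p-1)
      have e1 : |b| ^ (p - 1) * |b| ^ (3 - p) = |b| * |b| := by
        rw [← Real.rpow_add hb', show p - 1 + (3 - p) = 2 by ring,
          show (2:ℝ) = ((2:ℕ):ℝ) by norm_num, Real.rpow_natCast]
        ring
      have e2 : |b| ^ (3 - p) ≤ |a| ^ (3 - p) :=
        Real.rpow_le_rpow hb'.le hba (by linarith)
      have e3 : |a| ^ (p - 2) * |a| ^ (3 - p) = |a| := by
        rw [← Real.rpow_add ha', show p - 2 + (3 - p) = 1 by ring, Real.rpow_one]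
      have hap : 0 ≤ |a| ^ (p - 2) := Real.rpow_nonneg ha'.le _
      have e4 : |a| ^ (p - 2) * (|b| * |b|) ≤ |a| * |b| ^ (p - 1) := by
        rw [← e1]
        calc |a| ^ (p - 2) * (|b| ^ (p - 1) * |b| ^ (3 - p))
            ≤ |a| ^ (p - 2) * (|b| ^ (p - 1) * |a| ^ (3 - p)) := by
              apply mul_le_mul_of_nonneg_left _ hap
              exact mul_le_mul_of_nonneg_left e2 hb1
          _ = |a| ^ (p - 2) * |a| ^ (3 - p) * |b| ^ (p - 1) := by ring
          _ = |a| * |b| ^ (p - 1) := by rw [e3]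
      have hc : p * |b| * ((p - 1) * (2 * |a| ^ (p - 2)) * |b|)
          = 2 * p * (p - 1) * (|a| ^ (p - 2) * (|b| * |b|)) := by ring
      have h5 : 2 * p * (p - 1) * (|a| ^ (p - 2) * (|b| * |b|))
          ≤ 2 * p * (p - 1) * (|a| * |b| ^ (p - 1)) :=
        mul_le_mul_of_nonneg_left e4 (by nlinarith)
      have h6 : 2 * p * (p - 1) * (|a| * |b| ^ (p - 1)) ≤ 12 * (|a| * |b| ^ (p - 1)) :=
        mul_le_mul_of_nonneg_right (by nlinarith) (by positivity)
      rw [hc] at h2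
      linarith
  -- remaining terms
  have hbp : |b| ^ p ≤ |a| * |b| ^ (p - 1) := by
    have : |b| ^ p = |b| ^ (p - 1) * |b| := by
      rw [← Real.rpow_add_one (abs_ne_zero.mpr hb) (p - 1)]; norm_num
    rw [this]
    calc |b| ^ (p - 1) * |b| ≤ |b| ^ (p - 1) * |a| := mul_le_mul_of_nonneg_left hba hb1
      _ = |a| * |b| ^ (p - 1) := by ring
  have hbp0 : 0 ≤ |b| ^ p := Real.rpow_nonneg (abs_nonneg b) _
  have ht3 : |p * (a * Real.sign b * |b| ^ (p - 1))| ≤ 3 * |a| * |b| ^ (p - 1) := by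
    rw [abs_mul, abs_mul, abs_mul, abs_of_nonneg (by linarith : (0:ℝ) ≤ p)]
    have hsb : |Real.sign b| = 1 := by
      rcases Real.sign_apply_eq_of_ne_zero b hb with h | h <;> rw [h] <;> norm_num
    rw [hsb, mul_one, abs_of_nonneg hb1]
    have : p * (|a| * |b| ^ (p - 1)) ≤ 3 * (|a| * |b| ^ (p - 1)) :=
      mul_le_mul_of_nonneg_right hp3 (by positivity)
    linarith
  have ht3' := abs_le.mp ht3
  have hgoal : |a + b| ^ p - |a| ^ p - |b| ^ p -
      p * (Real.sign a * |a| ^ (p - 1) * b + a * Real.sign b * |b| ^ (p - 1))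
      = R - |b| ^ p - p * (a * Real.sign b * |b| ^ (p - 1)) := by
    rw [hR]; ring
  rw [hgoal, abs_le]
  constructor
  · nlinarith [ht3'.1, ht3'.2]
  · nlinarith [ht3'.1, ht3'.2]

theorem stmt_4 (p : ℝ) (hp1 : 1 ≤ p) (hp3 : p ≤ 3) :
    ∃ C : ℝ, 0 < C ∧ ∀ a b : ℝ,
      (|b| ≤ |a| →
        |(|a + b| ^ p - |a| ^ p - |b| ^ p -
            p * (Real.sign a * |a| ^ (p - 1) * b + a * Real.sign b * |b| ^ (p - 1)))| ≤
          C * |a| * |b| ^ (p - 1)) ∧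
      (|a| ≤ |b| →
        |(|a + b| ^ p - |a| ^ p - |b| ^ p -
            p * (Real.sign a * |a| ^ (p - 1) * b + a * Real.sign b * |b| ^ (p - 1)))| ≤
          C * |a| ^ (p - 1) * |b|) := by
  refine ⟨20, by norm_num, fun a b => ⟨fun h => keylem p hp1 hp3 a b h, fun h => ?_⟩⟩
  have key := keylem p hp1 hp3 b a h
  have e : |a + b| ^ p - |a| ^ p - |b| ^ p -
      p * (Real.sign a * |a| ^ (p - 1) * b + a * Real.sign b * |b| ^ (p - 1))
      = |b + a| ^ p - |b| ^ p - |a| ^ p -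
      p * (Real.sign b * |b| ^ (p - 1) * a + b * Real.sign a * |a| ^ (p - 1)) := by
    rw [add_comm a b]; ring
  rw [e]
  calc _ ≤ 20 * |b| * |a| ^ (p - 1) := key
    _ = 20 * |a| ^ (p - 1) * |b| := by ring
end

section
/- For every real p ≥ 3 there exists a constant C > 0 such that for all real a, b: | |a+b|^p − |a|^p − |b|^p − p·a·b·(|a|^{p−2} + |b|^{p−2}) | ≤ C·(|a|^{p−2}·b^2 + a^2·|b|^{p−2}). -/
open Real


lemma lipA (p : ℝ) (hp : 3 ≤ p) {x : ℝ} (hx : x ∈ Set.Icc (0:ℝ) 2) :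
    |x ^ (p-1) - 1| ≤ (p-1) * 2 ^ (p-2) * |x - 1| := by
  have hp1 : (1:ℝ) ≤ p - 1 := by linarith
  have he : p - 1 - 1 = p - 2 := by ring
  have h := Convex.norm_image_sub_le_of_norm_hasDerivWithin_le
    (f := fun x : ℝ => x ^ (p-1)) (f' := fun x : ℝ => (p-1) * x ^ (p-1-1))
    (s := Set.Icc (0:ℝ) 2) (C := (p-1) * 2 ^ (p-2))
    (fun y hy => (Real.hasDerivAt_rpow_const (x := y) (p := p-1) (Or.inr hp1)).hasDerivWithinAt)
    (fun y hy => by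
      rw [he]
      have h0 : (0:ℝ) ≤ y := hy.1
      have h2 : y ≤ 2 := hy.2
      have hle : y ^ (p-2) ≤ 2 ^ (p-2) := Real.rpow_le_rpow h0 h2 (by linarith)
      have hyp : (0:ℝ) ≤ y ^ (p-2) := Real.rpow_nonneg h0 _
      rw [Real.norm_eq_abs, abs_mul, abs_of_nonneg hyp, abs_of_nonneg (by linarith : (0:ℝ) ≤ p-1)]
      exact mul_le_mul_of_nonneg_left hle (by linarith))
    (convex_Icc 0 2) (Set.mem_Icc.mpr ⟨zero_le_one, one_le_two⟩) hx
  simpa [Real.one_rpow] using h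

lemma lipB (p : ℝ) (hp : 3 ≤ p) {b : ℝ} (hb : |b| ≤ 1) :
    |(1+b) ^ p - 1 - p * b| ≤ p * ((p-1) * 2 ^ (p-2)) * b ^ 2 := by
  have hp1 : (1:ℝ) ≤ p := by linarith
  set K := (p-1) * 2 ^ (p-2) with hK
  have hK0 : (0:ℝ) ≤ K := by
    have h2 : (0:ℝ) ≤ (2:ℝ) ^ (p-2) := Real.rpow_nonneg (by norm_num) _
    have : (0:ℝ) ≤ p - 1 := by linarith
    positivity
  have habs : ∀ x ∈ Set.uIcc (0:ℝ) b, |x| ≤ |b| := by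
    intro x hx
    rcases Set.mem_uIcc.mp hx with h | h
    · rw [abs_of_nonneg h.1]; linarith [le_abs_self b]
    · rw [abs_of_nonpos h.2]; linarith [neg_abs_le b]
  have h := Convex.norm_image_sub_le_of_norm_hasDerivWithin_le
    (f := fun x : ℝ => (1+x) ^ p - 1 - p * x)
    (f' := fun x : ℝ => p * (1+x) ^ (p-1) - p)
    (s := Set.uIcc (0:ℝ) b) (C := p * K * |b|)
    (fun y hy => by
      have h1 : HasDerivAt (fun x : ℝ => 1 + x) 1 y := (hasDerivAt_id y).const_add 1
      have h2 : HasDerivAt (fun x : ℝ => (1+x) ^ p) (1 * p * (1+y) ^ (p-1)) y :=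
        h1.rpow_const (Or.inr hp1)
      have h3 : HasDerivAt (fun x : ℝ => (1+x) ^ p - 1 - p * x)
          (1 * p * (1+y) ^ (p-1) - p * 1) y :=
        (h2.sub_const 1).sub ((hasDerivAt_id y).const_mul p)
      simpa [one_mul, mul_one] using h3.hasDerivWithinAt)
    (fun y hy => by
      have hyb : |y| ≤ |b| := habs y hy
      have hy1 : |y| ≤ 1 := hyb.trans hb
      have hmem : (1+y) ∈ Set.Icc (0:ℝ) 2 := by
        rw [abs_le] at hy1; constructor <;> [linarith [hy1.1]; linarith [hy1.2]]
      have hA := lipA p hp hmem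
      have heq : (1:ℝ) + y - 1 = y := by ring
      rw [heq] at hA
      have hp0 : (0:ℝ) ≤ p := by linarith
      have hfac : p * (1+y) ^ (p-1) - p = p * ((1+y) ^ (p-1) - 1) := by ring
      calc ‖p * (1+y) ^ (p-1) - p‖ = p * |(1+y) ^ (p-1) - 1| := by
            rw [Real.norm_eq_abs, hfac, abs_mul, abs_of_nonneg hp0]
        _ ≤ p * (K * |y|) := mul_le_mul_of_nonneg_left hA hp0
        _ ≤ p * (K * |b|) :=
            mul_le_mul_of_nonneg_left (mul_le_mul_of_nonneg_left hyb hK0) hp0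
        _ = p * K * |b| := by ring)
    (convex_uIcc 0 b) Set.left_mem_uIcc Set.right_mem_uIcc
  simp only [add_zero, Real.one_rpow, mul_zero, sub_zero, sub_self, Real.norm_eq_abs] at h
  calc |(1+b) ^ p - 1 - p * b| ≤ p * K * |b| * |b| := h
    _ = p * K * b ^ 2 := by rw [mul_assoc, abs_mul_abs_self, sq]

noncomputable def Fc (p a b : ℝ) : ℝ :=
  |a + b| ^ p - |a| ^ p - |b| ^ p -
    p * (Real.sign a * |a| ^ (p - 1) * b + a * Real.sign b * |b| ^ (p - 1))

noncomputable def Rc (p a b : ℝ) : ℝ := |a| ^ (p - 2) * b ^ 2 + a ^ 2 * |b| ^ (p - 2)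

lemma Rc_nonneg (p a b : ℝ) : 0 ≤ Rc p a b := by
  unfold Rc
  have h1 : (0:ℝ) ≤ |a| ^ (p-2) := Real.rpow_nonneg (abs_nonneg a) _
  have h2 : (0:ℝ) ≤ |b| ^ (p-2) := Real.rpow_nonneg (abs_nonneg b) _
  positivity

lemma Fc_symm (p a b : ℝ) : Fc p a b = Fc p b a := by
  unfold Fc; rw [add_comm b a]; ring

lemma Rc_symm (p a b : ℝ) : Rc p a b = Rc p b a := by unfold Rc; ring

lemma Fc_neg (p a b : ℝ) : Fc p (-a) (-b) = Fc p a b := by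
  unfold Fc
  rw [show -a + -b = -(a+b) by ring, abs_neg, abs_neg, abs_neg, Real.sign_neg, Real.sign_neg]
  ring

lemma Rc_neg (p a b : ℝ) : Rc p (-a) (-b) = Rc p a b := by
  unfold Rc; rw [abs_neg, abs_neg]; ring

lemma key_one (p : ℝ) (hp : 3 ≤ p) {t : ℝ} (ht : |t| ≤ 1) :
    |Fc p 1 t| ≤ (p * ((p-1) * 2 ^ (p-2)) + p + 1) * Rc p 1 t := by
  set K := p * ((p-1) * 2 ^ (p-2)) with hKdef
  have h2p : (0:ℝ) < (2:ℝ) ^ (p-2) := Real.rpow_pos_of_pos two_pos _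
  have hK0 : (0:ℝ) ≤ K := by nlinarith [mul_nonneg (mul_nonneg (show (0:ℝ) ≤ p by linarith) (show (0:ℝ) ≤ p - 1 by linarith)) h2p.le]
  have hRc : Rc p 1 t = t ^ 2 + |t| ^ (p-2) := by
    simp [Rc, abs_one, Real.one_rpow]
  rcases eq_or_ne t 0 with rfl | ht0
  · have : Fc p 1 0 = 0 := by
      simp [Fc, Real.zero_rpow (show p ≠ 0 from ne_of_gt (by linarith)), Real.sign_zero, abs_one,
        Real.one_rpow]
    rw [this, hRc]
    simp [Real.zero_rpow (show p - 2 ≠ 0 from ne_of_gt (by linarith))]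
  · -- t ≠ 0
    have ht1 : 1 + t ≥ 0 := by rcases abs_le.mp ht with ⟨h1, _⟩; linarith
    have hFe : Fc p 1 t = ((1+t) ^ p - 1 - p * t) - |t| ^ p -
        p * (Real.sign t * |t| ^ (p-1)) := by
      simp only [Fc, Real.sign_one, abs_one, Real.one_rpow, abs_of_nonneg ht1]
      ring
    have htpos : 0 < |t| := abs_pos.mpr ht0
    have hBp : |t| ^ p ≤ |t| ^ (p-2) :=
      Real.rpow_le_rpow_of_exponent_ge htpos ht (by linarith)
    have hBp1 : |t| ^ (p-1) ≤ |t| ^ (p-2) :=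
      Real.rpow_le_rpow_of_exponent_ge htpos ht (by linarith)
    have hA := lipB p hp ht
    have hsign : |Real.sign t| = 1 := by
      rcases lt_or_gt_of_ne ht0 with h | h
      · rw [Real.sign_of_neg h]; simp
      · rw [Real.sign_of_pos h]; simp
    have habs1 : |Real.sign t * |t| ^ (p-1)| = |t| ^ (p-1) := by
      rw [abs_mul, hsign, one_mul, abs_of_nonneg (Real.rpow_nonneg (abs_nonneg t) _)]
    have habs2 : |(|t| ^ p)| = |t| ^ p := abs_of_nonneg (Real.rpow_nonneg (abs_nonneg t) _)
    have htri : |Fc p 1 t| ≤ |(1+t) ^ p - 1 - p * t| + |t| ^ p +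
        p * (|t| ^ (p-1)) := by
      rw [hFe]
      calc |((1+t) ^ p - 1 - p * t) - |t| ^ p - p * (Real.sign t * |t| ^ (p-1))|
          ≤ |((1+t) ^ p - 1 - p * t) - |t| ^ p| + |p * (Real.sign t * |t| ^ (p-1))| :=
            abs_sub _ _
        _ ≤ (|(1+t) ^ p - 1 - p * t| + |(|t| ^ p)|) + |p| * |Real.sign t * |t| ^ (p-1)| := by
            rw [abs_mul]; exact add_le_add (abs_sub _ _) le_rfl
        _ = |(1+t) ^ p - 1 - p * t| + |t| ^ p + p * (|t| ^ (p-1)) := by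
            rw [habs1, habs2, abs_of_nonneg (by linarith : (0:ℝ) ≤ p)]
    have hp2 : (0:ℝ) ≤ |t| ^ (p-2) := Real.rpow_nonneg (abs_nonneg t) _
    have ht2 : (0:ℝ) ≤ t ^ 2 := sq_nonneg t
    rw [hRc]
    nlinarith [hA, hBp, hBp1, htri]

lemma sign_mul_pos {a t : ℝ} (ha : 0 < a) : Real.sign (a * t) = Real.sign t := by
  rcases lt_trichotomy t 0 with h | h | h
  · rw [Real.sign_of_neg h, Real.sign_of_neg (mul_neg_of_pos_of_neg ha h)]
  · simp [h]
  · rw [Real.sign_of_pos h, Real.sign_of_pos (mul_pos ha h)]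

lemma Fc_scale (p : ℝ) (hp : 3 ≤ p) {a : ℝ} (ha : 0 < a) (t : ℝ) :
    Fc p a (a * t) = a ^ p * Fc p 1 t := by
  have ha' : (0:ℝ) ≤ a := ha.le
  have haa : |a| = a := abs_of_pos ha
  have h1 : |a + a * t| ^ p = a ^ p * |1 + t| ^ p := by
    rw [show a + a * t = a * (1 + t) by ring, abs_mul, haa, Real.mul_rpow ha' (abs_nonneg _)]
  have h2 : |a * t| ^ p = a ^ p * |t| ^ p := by
    rw [abs_mul, haa, Real.mul_rpow ha' (abs_nonneg _)]
  have h3 : |a * t| ^ (p-1) = a ^ (p-1) * |t| ^ (p-1) := by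
    rw [abs_mul, haa, Real.mul_rpow ha' (abs_nonneg _)]
  have hsa : Real.sign a = 1 := Real.sign_of_pos ha
  have hst : Real.sign (a * t) = Real.sign t := sign_mul_pos ha
  have hpow : a ^ (p-1) * a = a ^ p := by
    have h := Real.rpow_add ha (p-1) 1
    rw [Real.rpow_one, show p - 1 + 1 = p from by ring] at h
    exact h.symm
  simp only [Fc, h1, h2, h3, hsa, hst, abs_one, Real.one_rpow, Real.sign_one]
  rw [haa, ← hpow]
  ring

lemma Rc_scale (p : ℝ) (hp : 3 ≤ p) {a : ℝ} (ha : 0 < a) (t : ℝ) :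
    Rc p a (a * t) = a ^ p * Rc p 1 t := by
  have ha' : (0:ℝ) ≤ a := ha.le
  have haa : |a| = a := abs_of_pos ha
  have h3 : |a * t| ^ (p-2) = a ^ (p-2) * |t| ^ (p-2) := by
    rw [abs_mul, haa, Real.mul_rpow ha' (abs_nonneg _)]
  have hpow : a ^ (p-2) * (a:ℝ) ^ (2:ℕ) = a ^ p := by
    have h := Real.rpow_add ha (p-2) 2
    rw [show p - 2 + 2 = p from by ring, show (2:ℝ) = ((2:ℕ):ℝ) from by norm_num,
      Real.rpow_natCast] at h
    exact h.symm
  simp only [Rc, h3, haa, abs_one, Real.one_rpow]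
  rw [← hpow]
  ring

lemma main_pos (p : ℝ) (hp : 3 ≤ p) {a b : ℝ} (ha : 0 < a) (hba : |b| ≤ a) :
    |Fc p a b| ≤ (p * ((p-1) * 2 ^ (p-2)) + p + 1) * Rc p a b := by
  set C := p * ((p-1) * 2 ^ (p-2)) + p + 1 with hC
  obtain ⟨t, rfl⟩ : ∃ t, b = a * t := ⟨b / a, by field_simp⟩
  have ht : |t| ≤ 1 := by
    rw [abs_mul, abs_of_pos ha] at hba
    rw [← mul_le_mul_iff_right₀ ha, mul_one]
    exact hba
  have hap : (0:ℝ) ≤ a ^ p := Real.rpow_nonneg ha.le _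
  calc |Fc p a (a * t)| = a ^ p * |Fc p 1 t| := by
        rw [Fc_scale p hp ha, abs_mul, abs_of_nonneg hap]
    _ ≤ a ^ p * (C * Rc p 1 t) := mul_le_mul_of_nonneg_left (key_one p hp ht) hap
    _ = C * Rc p a (a * t) := by rw [Rc_scale p hp ha]; ring

lemma main_half (p : ℝ) (hp : 3 ≤ p) {a b : ℝ} (hba : |b| ≤ |a|) :
    |Fc p a b| ≤ (p * ((p-1) * 2 ^ (p-2)) + p + 1) * Rc p a b := by
  rcases lt_trichotomy a 0 with ha | ha | ha
  · have h := main_pos p hp (show (0:ℝ) < -a by linarith)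
      (show |(-b)| ≤ -a by rw [abs_neg]; rw [abs_of_neg ha] at hba; exact hba)
    rwa [Fc_neg, Rc_neg] at h
  · subst ha
    have hb : b = 0 := by
      rw [abs_zero] at hba
      exact abs_eq_zero.mp (le_antisymm hba (abs_nonneg b))
    subst hb
    have hz : Fc p 0 0 = 0 := by
      simp [Fc, Real.zero_rpow (show p ≠ 0 from ne_of_gt (by linarith))]
    rw [hz, abs_zero]
    have h2p : (0:ℝ) < (2:ℝ) ^ (p-2) := Real.rpow_pos_of_pos two_pos _
    have hC : (0:ℝ) ≤ p * ((p-1) * 2 ^ (p-2)) + p + 1 := by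
      nlinarith [mul_nonneg (mul_nonneg (show (0:ℝ) ≤ p by linarith)
        (show (0:ℝ) ≤ p - 1 by linarith)) h2p.le]
    exact mul_nonneg hC (Rc_nonneg p 0 0)
  · exact main_pos p hp ha (by rwa [abs_of_pos ha] at hba)

theorem stmt_5 (p : ℝ) (hp : 3 ≤ p) :
    ∃ C : ℝ, 0 < C ∧ ∀ a b : ℝ,
      |(|a + b| ^ p - |a| ^ p - |b| ^ p -
          p * (Real.sign a * |a| ^ (p - 1) * b + a * Real.sign b * |b| ^ (p - 1)))| ≤
        C * (|a| ^ (p - 2) * b ^ 2 + a ^ 2 * |b| ^ (p - 2)) := by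
  refine ⟨p * ((p-1) * 2 ^ (p-2)) + p + 1, ?_, ?_⟩
  · have h2p : (0:ℝ) < (2:ℝ) ^ (p-2) := Real.rpow_pos_of_pos two_pos _
    nlinarith [mul_nonneg (mul_nonneg (show (0:ℝ) ≤ p by linarith)
      (show (0:ℝ) ≤ p - 1 by linarith)) h2p.le]
  · intro a b
    show |Fc p a b| ≤ _ * Rc p a b
    rcases le_total |b| |a| with h | h
    · exact main_half p hp h
    · have := main_half p hp h
      rwa [Fc_symm, Rc_symm] at this
end
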